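/- arXiv:1708.08096 — 3 statements merged into one kernel-verified Lean document; each statement's English description precedes it below -/
import Mathlib

section
/- For every integer n ≥ 0, the Euler polynomial E_n(x) equals x^n plus a sum over odd k with 1 ≤ k ≤ n of e_k(n) x^{n-k}; equivalently, the coefficient of x^{n-k} in E_n(x) is zero for every even k with 2 ≤ k ≤ n, and the leading coefficient is 1. -/
open Polynomial Finset

/-- Euler polynomials `E n`, defined by the recursion
`E n = X^n - (1/2) * ∑_{k<n} (n choose k) • E k`, equivalent to the
generating function `2 e^{xt}/(e^t + 1) = ∑ E_n(x) t^n/n!`. -/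
noncomputable def eulerPoly : ℕ → Polynomial ℚ :=
  WellFounded.fix Nat.lt_wfRel.wf fun n E =>
    Polynomial.X ^ n - (2⁻¹ : ℚ) • ∑ k : Fin n, ((n.choose k : ℚ)) • E k k.2

lemma eulerPoly_eq (n : ℕ) : eulerPoly n =
    Polynomial.X ^ n - (2⁻¹ : ℚ) • ∑ k ∈ range n, ((n.choose k : ℚ)) • eulerPoly k := by
  have : eulerPoly n =
      Polynomial.X ^ n - (2⁻¹ : ℚ) • ∑ k : Fin n, ((n.choose k : ℚ)) • eulerPoly k :=
    WellFounded.fix_eq _ _ _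
  rw [this, ← Fin.sum_univ_eq_sum_range (fun k => ((n.choose k : ℚ)) • eulerPoly k) n]

/-- constant coefficients -/
noncomputable def ec (n : ℕ) : ℚ := (eulerPoly n).coeff 0

lemma eulerPoly_coeff_of_gt : ∀ n j : ℕ, n < j → (eulerPoly n).coeff j = 0 := by
  intro n
  induction n using Nat.strong_induction_on with
  | _ n ih =>
    intro j hj
    rw [eulerPoly_eq, coeff_sub, coeff_smul, finset_sum_coeff]
    rw [coeff_X_pow, if_neg (by omega)]
    have : ∀ k ∈ range n, (((n.choose k : ℚ)) • eulerPoly k).coeff j = 0 := by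
      intro k hk
      rw [coeff_smul, ih k (mem_range.1 hk) j (by have := mem_range.1 hk; omega), smul_zero]
    rw [Finset.sum_congr rfl this, Finset.sum_const_zero, smul_zero, sub_zero]

lemma ec_zero : ec 0 = 1 := by
  rw [ec, eulerPoly_eq]
  simp

lemma ec_rec (n : ℕ) (hn : 1 ≤ n) :
    ∑ m ∈ range n, (n.choose m : ℚ) * ec m = -2 * ec n := by
  have h : ec n = 0 - 2⁻¹ * ∑ m ∈ range n, (n.choose m : ℚ) * ec m := by
    rw [ec, eulerPoly_eq, coeff_sub, coeff_smul, finset_sum_coeff, coeff_X_pow,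
      if_neg (by omega), smul_eq_mul,
      Finset.sum_congr rfl fun k _ => by rw [coeff_smul, smul_eq_mul]]
    rfl
  rw [h]; ring

noncomputable def ecF : PowerSeries ℚ := PowerSeries.mk fun n => ec n / n.factorial

lemma ecF_mul : ecF * (PowerSeries.exp ℚ + 1) = 2 := by
  ext n
  rw [PowerSeries.coeff_mul]
  rw [Finset.Nat.sum_antidiagonal_eq_sum_range_succ_mk]
  have key : ∀ k ∈ range (n + 1),
      (PowerSeries.coeff k) ecF * (PowerSeries.coeff (n - k)) (PowerSeries.exp ℚ + 1)
        = (n.choose k : ℚ) * ec k / n.factorial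
          + (if k = n then ec n / n.factorial else 0) := by
    intro k hk
    have hk' : k ≤ n := by simpa [Nat.lt_succ_iff] using hk
    rw [map_add, PowerSeries.coeff_exp, ecF, PowerSeries.coeff_mk]
    rw [Nat.cast_choose ℚ hk']
    by_cases h : k = n
    · subst h
      simp only [Nat.sub_self, if_pos rfl]
      have : (PowerSeries.coeff 0) (1 : PowerSeries ℚ) = 1 := by simp
      simp only [this]
      have h1 : (k.factorial : ℚ) ≠ 0 := Nat.cast_ne_zero.2 k.factorial_ne_zero
      simp only [Algebra.algebraMap_self, RingHom.id_apply, ↓reduceIte]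
      field_simp
    · have hlt : 0 < n - k := by omega
      have : (PowerSeries.coeff (n - k)) (1 : PowerSeries ℚ) = 0 := by
        rw [PowerSeries.coeff_one, if_neg (by omega)]
      rw [this, if_neg h, add_zero, add_zero]
      have h1 : (k.factorial : ℚ) ≠ 0 := Nat.cast_ne_zero.2 k.factorial_ne_zero
      have h2 : ((n - k).factorial : ℚ) ≠ 0 := Nat.cast_ne_zero.2 (n - k).factorial_ne_zero
      have h3 : (n.factorial : ℚ) ≠ 0 := Nat.cast_ne_zero.2 n.factorial_ne_zero
      simp only [Algebra.algebraMap_self, RingHom.id_apply]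
      field_simp
  rw [Finset.sum_congr rfl key, Finset.sum_add_distrib, Finset.sum_ite_eq' (range (n+1)) n,
    if_pos (self_mem_range_succ n)]
  rcases Nat.eq_zero_or_pos n with h | h
  · subst h
    simp [ec_zero]
    rw [show ((2 : PowerSeries ℚ) = PowerSeries.C 2) by simp [← map_ofNat (PowerSeries.C) 2]]
    simp
    norm_num
  · rw [← Finset.sum_div, Finset.sum_range_succ, ec_rec n h, Nat.choose_self]
    have h3 : (n.factorial : ℚ) ≠ 0 := Nat.cast_ne_zero.2 n.factorial_ne_zero
    have : (PowerSeries.coeff n) (2 : PowerSeries ℚ) = 0 := by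
      have : (2 : PowerSeries ℚ) = PowerSeries.C 2 := by
        simp [← map_ofNat (PowerSeries.C) 2]
      rw [this, PowerSeries.coeff_C, if_neg (by omega)]
    rw [this]
    field_simp
    ring

lemma ecF_add : ecF + PowerSeries.rescale (-1 : ℚ) ecF = 2 := by
  have h1 := ecF_mul
  have hres : PowerSeries.rescale (-1 : ℚ) ecF *
      (PowerSeries.rescale (-1 : ℚ) (PowerSeries.exp ℚ) + 1) = 2 := by
    have := congrArg (PowerSeries.rescale (-1 : ℚ)) h1
    simpa [map_mul, map_add, map_one, map_ofNat] using this
  have hexp : PowerSeries.rescale (-1 : ℚ) (PowerSeries.exp ℚ) * PowerSeries.exp ℚ = 1 := by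
    have := PowerSeries.exp_mul_exp_eq_exp_add (-1 : ℚ) 1
    norm_num [PowerSeries.rescale_one, PowerSeries.rescale_zero] at this
    simpa using this
  have h2 : PowerSeries.rescale (-1 : ℚ) ecF * (PowerSeries.exp ℚ + 1)
      = 2 * PowerSeries.exp ℚ := by
    have := congrArg (· * PowerSeries.exp ℚ) hres
    calc PowerSeries.rescale (-1 : ℚ) ecF * (PowerSeries.exp ℚ + 1)
        = PowerSeries.rescale (-1 : ℚ) ecF *
            (PowerSeries.rescale (-1 : ℚ) (PowerSeries.exp ℚ) + 1) * PowerSeries.exp ℚ := by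
          rw [mul_assoc, add_mul, hexp, one_mul, add_comm]
      _ = 2 * PowerSeries.exp ℚ := by rw [hres]
  have hne : (PowerSeries.exp ℚ + 1 : PowerSeries ℚ) ≠ 0 := by
    intro h
    have := congrArg (PowerSeries.constantCoeff) h
    simp at this
  apply mul_right_cancel₀ hne
  rw [add_mul, h1, h2]
  ring

lemma ec_even_eq_zero (n : ℕ) (h2 : 2 ≤ n) (he : Even n) : ec n = 0 := by
  have := congrArg (PowerSeries.coeff n) ecF_add
  rw [map_add, PowerSeries.coeff_rescale] at this
  rw [ecF, PowerSeries.coeff_mk, he.neg_one_pow, one_mul] at this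
  have hc2 : (PowerSeries.coeff n) (2 : PowerSeries ℚ) = 0 := by
    rw [show ((2 : PowerSeries ℚ) = PowerSeries.C 2) by simp [← map_ofNat (PowerSeries.C) 2],
      PowerSeries.coeff_C, if_neg (by omega)]
  rw [hc2] at this
  have h3 : (n.factorial : ℚ) ≠ 0 := Nat.cast_ne_zero.2 n.factorial_ne_zero
  field_simp at this
  linarith

lemma eulerPoly_coeff (n : ℕ) : ∀ j, j ≤ n →
    (eulerPoly n).coeff j = (n.choose j : ℚ) * ec (n - j) := by
  induction n using Nat.strong_induction_on with
  | _ n ih =>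
    intro j hj
    rw [eulerPoly_eq, coeff_sub, coeff_smul, finset_sum_coeff, coeff_X_pow]
    have hterm : ∀ m ∈ range n, (((n.choose m : ℚ)) • eulerPoly m).coeff j
        = if j ≤ m then (n.choose j : ℚ) * (((n - j).choose (m - j) : ℚ) * ec (m - j))
          else 0 := by
      intro m hm
      have hmn := mem_range.1 hm
      rw [coeff_smul, smul_eq_mul]
      by_cases h : j ≤ m
      · rw [if_pos h, ih m hmn j h]
        have hcast : ((n.choose m : ℚ)) * (m.choose j : ℚ)
            = (n.choose j : ℚ) * ((n - j).choose (m - j) : ℚ) := by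
          exact_mod_cast congrArg (Nat.cast : ℕ → ℚ)
            (Nat.choose_mul (n := n) h)
        rw [← mul_assoc, hcast, mul_assoc]
      · rw [if_neg h, eulerPoly_coeff_of_gt m j (by omega), mul_zero]
    rw [Finset.sum_congr rfl hterm, Finset.range_eq_Ico,
      ← Finset.sum_Ico_consecutive _ (Nat.zero_le j) hj]
    have hlow : ∀ m ∈ Finset.Ico 0 j,
        (if j ≤ m then (n.choose j : ℚ) * (((n - j).choose (m - j) : ℚ) * ec (m - j))
          else 0) = 0 := by
      intro m hm
      rw [if_neg (by simpa using (Finset.mem_Ico.1 hm).2)]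
    rw [Finset.sum_congr rfl hlow, Finset.sum_const_zero, zero_add]
    have hhigh : ∀ m ∈ Finset.Ico j n,
        (if j ≤ m then (n.choose j : ℚ) * (((n - j).choose (m - j) : ℚ) * ec (m - j))
          else 0) = (n.choose j : ℚ) * (((n - j).choose (m - j) : ℚ) * ec (m - j)) := by
      intro m hm
      rw [if_pos (Finset.mem_Ico.1 hm).1]
    rw [Finset.sum_congr rfl hhigh, Finset.sum_Ico_eq_sum_range]
    simp only [Nat.add_sub_cancel_left]
    rcases eq_or_lt_of_le hj with h | h
    · subst h
      simp [ec_zero]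
    · rw [if_neg (by omega), ← Finset.mul_sum, smul_eq_mul,
        Finset.sum_congr rfl (fun r _ => rfl), ec_rec (n - j) (by omega)]
      ring

theorem stmt_4 (n : ℕ) :
    (eulerPoly n).coeff n = 1 ∧
    ∀ k : ℕ, 2 ≤ k → k ≤ n → Even k → (eulerPoly n).coeff (n - k) = 0 := by
  constructor
  · rw [eulerPoly_coeff n n le_rfl]
    simp [ec_zero]
  · intro k h2 hkn he
    rw [eulerPoly_coeff n (n - k) (Nat.sub_le _ _),
      show n - (n - k) = k from by omega, ec_even_eq_zero k h2 he, mul_zero]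
end

section
/- For every integer n ≥ 1 and every odd k with 1 ≤ k ≤ n, the coefficient of x^{n-k} in the Euler polynomial E_n(x) equals -C(n,k) · Σ_{j=0}^{k} (-1)^j S(k+1, j+1) · j!/2^j, where S denotes Stirling numbers of the second kind. -/
open Polynomial Finset

/-- Stirling numbers of the second kind. -/
def stirlingS2 : ℕ → ℕ → ℕ
  | 0, 0 => 1
  | 0, _ + 1 => 0
  | _ + 1, 0 => 0
  | n + 1, k + 1 => stirlingS2 n k + (k + 1) * stirlingS2 n (k + 1)

theorem eulerPoly_def (n : ℕ) :
    eulerPoly n = Polynomial.X ^ n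
      - (2⁻¹ : ℚ) • ∑ m ∈ range n, ((n.choose m : ℚ)) • eulerPoly m := by
  show WellFounded.fix _ _ n = _
  rw [WellFounded.fix_eq]
  exact congrArg _ (congrArg _ (Fin.sum_univ_eq_sum_range
    (fun m => (n.choose m : ℚ) • eulerPoly m) n))

/-- `e n = E n (0)`, the constant coefficient of the Euler polynomial. -/
noncomputable def e (n : ℕ) : ℚ := (eulerPoly n).coeff 0

theorem e_zero : e 0 = 1 := by
  simp [e, eulerPoly_def 0]

theorem e_rec (n : ℕ) (hn : 1 ≤ n) :
    e n = -2⁻¹ * ∑ m ∈ range n, (n.choose m : ℚ) * e m := by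
  have h0 : (0 : ℕ) ≠ n := by omega
  unfold e
  rw [eulerPoly_def n]
  rw [coeff_sub, coeff_smul, finset_sum_coeff, coeff_X_pow, if_neg h0]
  simp only [coeff_smul, smul_eq_mul]
  ring_nf

theorem coeff_eulerPoly (n : ℕ) :
    ∀ j, (eulerPoly n).coeff j = if j ≤ n then (n.choose j : ℚ) * e (n - j) else 0 := by
  induction n using Nat.strong_induction_on with
  | _ n ih =>
    intro j
    rw [eulerPoly_def n, coeff_sub, coeff_smul, finset_sum_coeff, coeff_X_pow]
    simp only [coeff_smul, smul_eq_mul]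
    have hsum : ∀ m ∈ range n, (n.choose m : ℚ) * (eulerPoly m).coeff j
        = (n.choose m : ℚ) * (if j ≤ m then (m.choose j : ℚ) * e (m - j) else 0) := by
      intro m hm
      rw [ih m (mem_range.mp hm)]
    rw [Finset.sum_congr rfl hsum]
    rcases lt_trichotomy j n with hj | hj | hj
    · -- j < n
      rw [if_neg (by omega : ¬ j = n), if_pos (le_of_lt hj)]
      have hz : ∀ m ∈ range j, (n.choose m : ℚ) *
          (if j ≤ m then (m.choose j : ℚ) * e (m - j) else 0) = 0 := by
        intro m hm
        rw [if_neg (by simpa using Nat.not_le.mpr (mem_range.mp hm)), mul_zero]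
      have hsplit := Finset.sum_range_add_sum_Ico
        (fun m => (n.choose m : ℚ) * (if j ≤ m then (m.choose j : ℚ) * e (m - j) else 0))
        (le_of_lt hj)
      rw [← hsplit, Finset.sum_eq_zero hz, zero_add, Finset.sum_Ico_eq_sum_range]
      have hterm : ∀ i ∈ range (n - j),
          (n.choose (j + i) : ℚ) * (if j ≤ j + i then ((j + i).choose j : ℚ) * e (j + i - j) else 0)
          = (n.choose j : ℚ) * (((n - j).choose i : ℚ) * e i) := by
        intro i hi
        have hi' : i < n - j := mem_range.mp hi
        rw [if_pos (Nat.le_add_right j i), Nat.add_sub_cancel_left]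
        have hc := Nat.choose_mul (n := n) (Nat.le_add_right j i)
        have : (n.choose (j + i) : ℚ) * ((j + i).choose j : ℚ)
            = (n.choose j : ℚ) * ((n - j).choose (j + i - j) : ℚ) := by
          exact_mod_cast congrArg (Nat.cast : ℕ → ℚ) hc
        rw [Nat.add_sub_cancel_left] at this
        rw [← mul_assoc, this, mul_assoc]
      rw [Finset.sum_congr rfl hterm, ← Finset.mul_sum]
      have he := e_rec (n - j) (by omega)
      have : ∑ i ∈ range (n - j), ((n - j).choose i : ℚ) * e i = -2 * e (n - j) := by
        field_simp at he ⊢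
        linarith [he]
      rw [this]
      ring
    · -- j = n
      subst hj
      rw [if_pos rfl, if_pos le_rfl, Nat.sub_self, Nat.choose_self, e_zero]
      have : ∀ m ∈ range j, (j.choose m : ℚ) *
          (if j ≤ m then (m.choose j : ℚ) * e (m - j) else 0) = 0 := by
        intro m hm
        rw [if_neg (by simpa using Nat.not_le.mpr (mem_range.mp hm)), mul_zero]
      rw [Finset.sum_eq_zero this]
      norm_num
    · -- j > n
      rw [if_neg (by omega : ¬ j = n), if_neg (by omega : ¬ j ≤ n)]
      have : ∀ m ∈ range n, (n.choose m : ℚ) *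
          (if j ≤ m then (m.choose j : ℚ) * e (m - j) else 0) = 0 := by
        intro m hm
        have : ¬ j ≤ m := by have := mem_range.mp hm; omega
        rw [if_neg this, mul_zero]
      rw [Finset.sum_eq_zero this]
      norm_num

theorem stirlingS2_zero_right (n : ℕ) (hn : 1 ≤ n) : stirlingS2 n 0 = 0 := by
  cases n with
  | zero => omega
  | succ m => rfl

theorem stirlingS2_eq_zero_of_lt : ∀ n k, n < k → stirlingS2 n k = 0 := by
  intro n
  induction n with
  | zero => intro k hk; cases k with | zero => omega | succ m => rfl
  | succ m ih =>
    intro k hk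
    cases k with
    | zero => omega
    | succ j =>
      show stirlingS2 m j + (j + 1) * stirlingS2 m (j + 1) = 0
      rw [ih j (by omega), ih (j+1) (by omega)]
      ring

theorem stir_key : ∀ n, 1 ≤ n → ∀ j,
    (j + 1) * stirlingS2 n (j + 1) = ∑ m ∈ range n, n.choose m * stirlingS2 m j := by
  intro n
  induction n with
  | zero => omega
  | succ m ih =>
    intro _ j
    rcases Nat.eq_zero_or_pos m with hm | hm
    · subst hm
      rw [Finset.sum_range_one]
      show (j + 1) * (stirlingS2 0 j + (j + 1) * stirlingS2 0 (j + 1)) = 1 * stirlingS2 0 j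
      cases j with
      | zero => rfl
      | succ i =>
        rw [stirlingS2_eq_zero_of_lt 0 (i+1) (by omega),
          stirlingS2_eq_zero_of_lt 0 (i+2) (by omega)]
        simp
    · -- m ≥ 1
      have ihm := ih hm
      rw [Finset.sum_range_succ' (fun i => (m+1).choose i * stirlingS2 i j) m]
      simp only [Nat.choose_succ_succ, Nat.choose_zero_right, one_mul, Nat.succ_eq_add_one]
      have hsecond : (∑ i ∈ range m, m.choose (i+1) * stirlingS2 (i+1) j) + stirlingS2 0 j
          = (j + 1) * stirlingS2 m (j + 1) + stirlingS2 m j := by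
        have h1 := Finset.sum_range_succ' (fun i => m.choose i * stirlingS2 i j) m
        have h2 := Finset.sum_range_succ (fun i => m.choose i * stirlingS2 i j) m
        simp only [Nat.choose_zero_right, one_mul, Nat.choose_self] at h1 h2
        rw [← ihm j] at h2
        rw [← h1, h2]
      have hmid : (∑ i ∈ range m, m.choose i * stirlingS2 (i+1) j)
          = j * stirlingS2 m j + j * (j + 1) * stirlingS2 m (j + 1) := by
        cases j with
        | zero =>
          simp only [Nat.zero_eq, zero_mul, zero_add, add_zero]
          apply Finset.sum_eq_zero
          intro i _
          rw [stirlingS2_zero_right (i+1) (by omega), mul_zero]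
        | succ j' =>
          have hstep : ∀ i ∈ range m, m.choose i * stirlingS2 (i+1) (j'+1)
              = m.choose i * stirlingS2 i j' + (j' + 1) * (m.choose i * stirlingS2 i (j'+1)) := by
            intro i _
            show m.choose i * (stirlingS2 i j' + (j' + 1) * stirlingS2 i (j' + 1)) = _
            ring
          rw [Finset.sum_congr rfl hstep, Finset.sum_add_distrib, ← Finset.mul_sum,
            ← ihm j', ← ihm (j'+1)]
          ring
      have hsplit : ∀ x ∈ range m, (m.choose x + m.choose (x+1)) * stirlingS2 (x+1) j
          = m.choose x * stirlingS2 (x+1) j + m.choose (x+1) * stirlingS2 (x+1) j := by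
        intro x _; ring
      rw [Finset.sum_congr rfl hsplit, Finset.sum_add_distrib, add_assoc, hsecond, hmid]
      show (j + 1) * (stirlingS2 m j + (j + 1) * stirlingS2 m (j + 1)) = _
      ring

/-- `T n = ∑_j (-1)^j S(n,j) j! / 2^j`, the value of the Fubini polynomial at `-1/2`. -/
noncomputable def T (n : ℕ) : ℚ :=
  ∑ j ∈ range (n + 1), (-1 : ℚ) ^ j * (stirlingS2 n j : ℚ) * (j.factorial : ℚ) / 2 ^ j

theorem T_zero : T 0 = 1 := by
  simp [T, stirlingS2]

theorem T_rec (n : ℕ) (hn : 1 ≤ n) :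
    T n = -2⁻¹ * ∑ m ∈ range n, (n.choose m : ℚ) * T m := by
  have hext : ∀ m ∈ range n, (n.choose m : ℚ) * T m
      = ∑ j ∈ range n, (n.choose m : ℚ) *
          ((-1 : ℚ) ^ j * (stirlingS2 m j : ℚ) * (j.factorial : ℚ) / 2 ^ j) := by
    intro m hm
    have hmn : m + 1 ≤ n := mem_range.mp hm
    rw [T, Finset.mul_sum]
    apply Finset.sum_subset
    · intro x hx
      simp only [mem_range] at hx ⊢
      omega
    · intro x _ hx
      simp only [mem_range, not_lt] at hx
      rw [stirlingS2_eq_zero_of_lt m x (by omega)]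
      norm_num
  rw [Finset.sum_congr rfl hext, Finset.sum_comm]
  have hinner : ∀ j ∈ range n,
      (∑ m ∈ range n, (n.choose m : ℚ) *
        ((-1 : ℚ) ^ j * (stirlingS2 m j : ℚ) * (j.factorial : ℚ) / 2 ^ j))
      = (-1 : ℚ) ^ j * (j.factorial : ℚ) / 2 ^ j *
          (((j : ℚ) + 1) * (stirlingS2 n (j+1) : ℚ)) := by
    intro j _
    have hk := stir_key n hn j
    have hkq : ((j : ℚ) + 1) * (stirlingS2 n (j+1) : ℚ)
        = ∑ m ∈ range n, (n.choose m : ℚ) * (stirlingS2 m j : ℚ) := by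
      exact_mod_cast congrArg (Nat.cast : ℕ → ℚ) hk
    rw [hkq, Finset.mul_sum]
    apply Finset.sum_congr rfl
    intro m _
    ring
  rw [Finset.sum_congr rfl hinner]
  rw [T, Finset.sum_range_succ'
    (fun j => (-1 : ℚ) ^ j * (stirlingS2 n j : ℚ) * (j.factorial : ℚ) / 2 ^ j) n]
  rw [stirlingS2_zero_right n hn, Finset.mul_sum]
  norm_num
  rw [← Finset.sum_neg_distrib]
  apply Finset.sum_congr rfl
  intro k _
  rw [Nat.factorial_succ]
  push_cast
  rw [pow_succ, pow_succ]
  ring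

theorem e_eq_T : ∀ n, e n = T n := by
  intro n
  induction n using Nat.strong_induction_on with
  | _ n ih =>
    rcases Nat.eq_zero_or_pos n with hn | hn
    · subst hn; rw [e_zero, T_zero]
    · rw [e_rec n hn, T_rec n hn]
      congr 1
      apply Finset.sum_congr rfl
      intro m hm
      rw [ih m (mem_range.mp hm)]

theorem key_sum (k : ℕ) (hk : 1 ≤ k) :
    (∑ j ∈ Finset.range (k + 1),
        (-1 : ℚ) ^ j * stirlingS2 (k + 1) (j + 1) * (j.factorial : ℚ) / 2 ^ j) = -T k := by
  have hexp : ∀ j ∈ range (k + 1),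
      (-1 : ℚ) ^ j * (stirlingS2 (k + 1) (j + 1) : ℚ) * (j.factorial : ℚ) / 2 ^ j
      = (-1 : ℚ) ^ j * (stirlingS2 k j : ℚ) * (j.factorial : ℚ) / 2 ^ j
        + (-2) * ((-1 : ℚ) ^ (j+1) * (stirlingS2 k (j+1) : ℚ) * ((j+1).factorial : ℚ) / 2 ^ (j+1)) := by
    intro j _
    have : stirlingS2 (k + 1) (j + 1) = stirlingS2 k j + (j + 1) * stirlingS2 k (j + 1) := rfl
    rw [this, Nat.factorial_succ]
    push_cast
    rw [pow_succ, pow_succ]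
    ring
  rw [Finset.sum_congr rfl hexp, Finset.sum_add_distrib]
  have h1 : (∑ j ∈ range (k + 1),
      (-1 : ℚ) ^ j * (stirlingS2 k j : ℚ) * (j.factorial : ℚ) / 2 ^ j) = T k := rfl
  have h2 : (∑ j ∈ range (k + 1),
      (-2 : ℚ) * ((-1 : ℚ) ^ (j+1) * (stirlingS2 k (j+1) : ℚ) * ((j+1).factorial : ℚ) / 2 ^ (j+1)))
      = -2 * T k := by
    rw [← Finset.mul_sum]
    congr 1
    have hs := Finset.sum_range_succ'
      (fun j => (-1 : ℚ) ^ j * (stirlingS2 k j : ℚ) * (j.factorial : ℚ) / 2 ^ j) (k + 1)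
    have hs2 := Finset.sum_range_succ
      (fun j => (-1 : ℚ) ^ j * (stirlingS2 k j : ℚ) * (j.factorial : ℚ) / 2 ^ j) (k + 1)
    rw [stirlingS2_eq_zero_of_lt k (k+1) (by omega)] at hs2
    rw [stirlingS2_zero_right k hk] at hs
    simp only [Nat.cast_zero, mul_zero, zero_mul, zero_div, add_zero, zero_add,
      mul_zero, zero_div] at hs hs2
    have : (∑ j ∈ range (k + 2),
        (-1 : ℚ) ^ j * (stirlingS2 k j : ℚ) * (j.factorial : ℚ) / 2 ^ j) = T k := by
      rw [hs2]; rfl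
    rw [← hs, this]
  rw [h1, h2]
  ring

theorem stmt_6 (n k : ℕ) (hn : 1 ≤ n) (hk : Odd k) (hk1 : 1 ≤ k) (hkn : k ≤ n) :
    (eulerPoly n).coeff (n - k) =
      -(n.choose k : ℚ) *
        ∑ j ∈ Finset.range (k + 1),
          (-1 : ℚ) ^ j * stirlingS2 (k + 1) (j + 1) * (j.factorial : ℚ) / 2 ^ j := by
  rw [coeff_eulerPoly n (n - k), if_pos (Nat.sub_le n k), Nat.choose_symm hkn,
    (by omega : n - (n - k) = k), e_eq_T k, key_sum k hk1]
  ring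
end

section
/- For every odd integer k ≥ 1, the rational number (2^{k+1}-1) · N(2B_{k+1}) is an odd integer, where N(2B_{k+1}) denotes the numerator of 2B_{k+1} in lowest terms. -/
open Finset

/-- The subring of rationals with odd denominator (the localization of ℤ at 2). -/
def R2 : Subring ℚ where
  carrier := {q : ℚ | Odd q.den}
  one_mem' := by simp
  zero_mem' := by simp
  add_mem' := by
    intro a b ha hb
    rw [Set.mem_setOf_eq, Nat.not_even_iff_odd.symm, even_iff_two_dvd] at *
    intro h
    have := h.trans (Rat.add_den_dvd a b)
    rcases (Nat.prime_two.dvd_mul).1 this with h' | h'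
    · exact ha h'
    · exact hb h'
  mul_mem' := by
    intro a b ha hb
    rw [Set.mem_setOf_eq, Nat.not_even_iff_odd.symm, even_iff_two_dvd] at *
    intro h
    have := h.trans (Rat.mul_den_dvd a b)
    rcases (Nat.prime_two.dvd_mul).1 this with h' | h'
    · exact ha h'
    · exact hb h'
  neg_mem' := by
    intro a ha
    simpa [Set.mem_setOf_eq, Rat.den_neg_eq_den] using ha

lemma mem_R2_iff (q : ℚ) : q ∈ R2 ↔ Odd q.den := Iff.rfl

lemma inv_mem_R2 {n : ℕ} (hn : Odd n) : ((n : ℚ))⁻¹ ∈ R2 := by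
  have h0 : 0 < n := by
    rcases hn with ⟨t, rfl⟩; omega
  rw [mem_R2_iff, Rat.inv_natCast_den_of_pos h0]
  exact hn

/-- Key identity from Faulhaber's formula with `n = 2`. -/
lemma bern_ident (m : ℕ) (hm : 1 ≤ m) :
    2 * bernoulli m =
      1 - 2 * (((m : ℚ) + 1)⁻¹ *
        ∑ i ∈ range m, (2 * bernoulli i) * ((m + 1).choose i) * 2 ^ (m - 1 - i)) := by
  have h := sum_range_pow 2 m
  have hL : (∑ k ∈ range 2, (k : ℚ) ^ m) = 1 := by
    rw [show (2 : ℕ) = 1 + 1 from rfl, Finset.sum_range_succ, Finset.sum_range_one]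
    simp [zero_pow (by omega : m ≠ 0)]
  rw [hL, Finset.sum_range_succ] at h
  simp only [Nat.cast_ofNat] at h
  have hm1 : ((m : ℚ) + 1) ≠ 0 := by positivity
  have hlast : bernoulli m * ((m + 1).choose m) * (2 : ℚ) ^ (m + 1 - m) / (m + 1)
      = 2 * bernoulli m := by
    rw [Nat.choose_succ_self_right, show m + 1 - m = 1 by omega]
    push_cast
    field_simp
  rw [hlast] at h
  have hsum : (∑ i ∈ range m, bernoulli i * ((m + 1).choose i) * (2:ℚ) ^ (m + 1 - i) / (m + 1))
      = 2 * (((m : ℚ) + 1)⁻¹ *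
        ∑ i ∈ range m, (2 * bernoulli i) * ((m + 1).choose i) * 2 ^ (m - 1 - i)) := by
    rw [Finset.mul_sum, Finset.mul_sum]
    apply Finset.sum_congr rfl
    intro i hi
    rw [Finset.mem_range] at hi
    rw [show m + 1 - i = (m - 1 - i) + 2 by omega, pow_add]
    field_simp
  rw [hsum] at h
  linarith

lemma two_bernoulli_mem_R2 : ∀ m : ℕ, 2 * bernoulli m ∈ R2 := by
  intro m
  induction m using Nat.strong_induction_on with
  | _ m ih =>
    rcases Nat.eq_zero_or_pos m with rfl | hm
    · rw [bernoulli_zero]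
      norm_num [mem_R2_iff]
    rcases Nat.even_or_odd m with he | ho
    · -- even case: use the identity
      have hodd : Odd (m + 1) := he.add_one
      rw [bern_ident m hm]
      refine sub_mem (one_mem _) (mul_mem ?_ (mul_mem (by exact_mod_cast inv_mem_R2 hodd) ?_))
      · exact_mod_cast natCast_mem R2 2
      · refine Subring.sum_mem _ (fun i hi => ?_)
        exact mul_mem (mul_mem (ih i (Finset.mem_range.1 hi))
          (natCast_mem R2 _)) (by exact_mod_cast natCast_mem R2 (2 ^ (m-1-i)))
    · rcases eq_or_lt_of_le (show 1 ≤ m from hm) with h1 | h3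
      · rw [← h1, bernoulli_one]
        norm_num [mem_R2_iff]
      · have : bernoulli m = 0 := by
          rw [bernoulli_eq_bernoulli'_of_ne_one (by omega)]
          exact bernoulli'_eq_zero_of_odd ho h3
        rw [this]
        norm_num [mem_R2_iff]

lemma two_bernoulli_eq (m : ℕ) (hm : 1 ≤ m) (he : Even m) :
    ∃ s ∈ R2, 2 * bernoulli m = 1 + 2 * s := by
  refine ⟨-(((m : ℚ) + 1)⁻¹ *
      ∑ i ∈ range m, (2 * bernoulli i) * ((m + 1).choose i) * 2 ^ (m - 1 - i)), ?_, ?_⟩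
  · refine neg_mem (mul_mem (by exact_mod_cast inv_mem_R2 he.add_one) ?_)
    refine Subring.sum_mem _ (fun i hi => ?_)
    exact mul_mem (mul_mem (two_bernoulli_mem_R2 i)
      (natCast_mem R2 _)) (by exact_mod_cast natCast_mem R2 (2 ^ (m-1-i)))
  · rw [bern_ident m hm]; ring

lemma num_odd_of_eq_one_add {q s : ℚ} (hs : s ∈ R2) (h : q = 1 + 2 * s) : Odd q.num := by
  have hd : Odd s.den := hs
  set N : ℤ := (s.den : ℤ) + 2 * s.num with hN
  have hNodd : Odd N := by
    rcases hd with ⟨t, ht⟩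
    exact ⟨(t : ℤ) + s.num, by push_cast [hN, ht]; ring⟩
  have hden : ((s.den : ℚ)) ≠ 0 := by exact_mod_cast s.den_nz
  have hqden : ((q.den : ℚ)) ≠ 0 := by exact_mod_cast q.den_nz
  have hsnum : (s.num : ℚ) = s * s.den := (Rat.mul_den_eq_num s).symm
  have hq : q = (N : ℚ) / (s.den : ℚ) := by
    rw [h, hN, eq_div_iff hden]
    push_cast
    rw [hsnum]
    ring
  have hcross : (q.num : ℚ) * (s.den : ℚ) = (N : ℚ) * (q.den : ℚ) := by
    rw [← Rat.num_div_den q, div_eq_div_iff hqden hden] at hq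
    exact hq
  have hcrossZ : q.num * (s.den : ℤ) = N * (q.den : ℤ) := by exact_mod_cast hcross
  rw [Int.not_even_iff_odd.symm]
  intro hev
  have h1 : Even (N * (q.den : ℤ)) := by rw [← hcrossZ]; exact hev.mul_right _
  rcases Int.even_mul.1 h1 with h2 | h2
  · exact (Int.not_even_iff_odd.2 hNodd) h2
  · have hd2 : (2 : ℕ) ∣ q.den := by
      have : Even q.den := by exact_mod_cast h2
      exact this.two_dvd
    have hn2 : (2 : ℕ) ∣ q.num.natAbs := by
      rcases hev with ⟨t, ht⟩
      exact ⟨t.natAbs, by rw [ht, show t + t = 2 * t by ring, Int.natAbs_mul]; rfl⟩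
    have := Nat.dvd_gcd hn2 hd2
    rw [q.reduced] at this
    omega

theorem stmt_11 (k : ℕ) (hk : Odd k) (hk1 : 1 ≤ k) :
    Odd ((2 ^ (k + 1) - 1 : ℤ) * (2 * bernoulli (k + 1)).num) := by
  obtain ⟨s, hs, heq⟩ := two_bernoulli_eq (k + 1) (by omega) (by simpa using hk.add_one)
  refine Odd.mul ?_ (num_odd_of_eq_one_add hs heq)
  have : Even (2 ^ (k + 1) : ℤ) := ⟨2 ^ k, by ring⟩
  exact this.sub_odd odd_one
end
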